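/- Let Δ be a facet complex, and let F₁, …, Fₙ be distinct facets with n ≥ 3 such that F₁ ∼_Δ F₂ ∼_Δ ⋯ ∼_Δ Fₙ ∼_Δ F₁ (consecutive facets are strong neighbors, cyclically). Then the facet complex {F₁, …, Fₙ} has no leaf. -/
import Mathlib


variable {V : Type*} [DecidableEq V]

/-- A facet complex: no facet contains another. -/
def IsFacetComplex (Δ : Finset (Finset V)) : Prop :=
  ∀ F ∈ Δ, ∀ G ∈ Δ, F ⊆ G → F = G

/-- `F` is a leaf of `Δ`. -/
def IsLeaf (Δ : Finset (Finset V)) (F : Finset V) : Prop :=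
  F ∈ Δ ∧ (Δ = {F} ∨ ∃ G ∈ Δ.erase F, ∀ H ∈ Δ.erase F, H ∩ F ⊆ G ∩ F)

/-- `Δ` is a forest: every nonempty subset has a leaf. -/
def IsForest (Δ : Finset (Finset V)) : Prop :=
  ∀ Γ ⊆ Δ, Γ.Nonempty → ∃ F, IsLeaf Γ F

/-- `Δ` is connected: any two facets are joined by a path of consecutively
intersecting facets. -/
def FCConnected (Δ : Finset (Finset V)) : Prop :=
  ∀ F ∈ Δ, ∀ G ∈ Δ,
    Relation.ReflTransGen (fun A B => A ∈ Δ ∧ B ∈ Δ ∧ (A ∩ B).Nonempty) F G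

/-- A (simplicial) tree is a connected forest. -/
def IsTree (Δ : Finset (Finset V)) : Prop := FCConnected Δ ∧ IsForest Δ

/-- A cycle: a nonempty facet complex with no leaf, every nonempty proper
subset of which has a leaf. -/
def IsCycle (Δ : Finset (Finset V)) : Prop :=
  Δ.Nonempty ∧ (¬ ∃ F, IsLeaf Δ F) ∧ ∀ Γ ⊂ Δ, Γ.Nonempty → ∃ F, IsLeaf Γ F

/-- Strong neighbors in `Δ`. -/
def StrongNeighbor (Δ : Finset (Finset V)) (F G : Finset V) : Prop :=
  F ∈ Δ ∧ G ∈ Δ ∧ F ≠ G ∧ ∀ H ∈ Δ, F ∩ G ⊆ H → H = F ∨ H = G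

theorem strong_neighbor_circuit_no_leaf (Δ : Finset (Finset V))
    (hΔ : IsFacetComplex Δ) (n : ℕ) (F : Fin (n + 3) → Finset V)
    (hinj : Function.Injective F)
    (hcirc : ∀ i : Fin (n + 3), StrongNeighbor Δ (F i) (F (i + 1))) :
    ¬ ∃ G, IsLeaf (Finset.image F Finset.univ) G := by
  rintro ⟨L, hLmem, hcase⟩
  obtain ⟨i, -, rfl⟩ := Finset.mem_image.mp hLmem
  have hmemΔ : ∀ j, F j ∈ Δ := fun j => (hcirc j).1
  have hne : ∀ j, F j ≠ F (j + 1) := fun j => (hcirc j).2.2.1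
  rcases hcase with heq | ⟨G, hG, hGmax⟩
  · have h1 : F (i + 1) ∈ Finset.image F Finset.univ :=
      Finset.mem_image_of_mem _ (Finset.mem_univ _)
    rw [heq, Finset.mem_singleton] at h1
    exact hne i h1.symm
  · obtain ⟨hGne, hGmem⟩ := Finset.mem_erase.mp hG
    obtain ⟨j, -, rfl⟩ := Finset.mem_image.mp hGmem
    -- F (i+1) is in the erase
    have hp : F (i + 1) ∈ (Finset.image F Finset.univ).erase (F i) :=
      Finset.mem_erase.mpr ⟨Ne.symm (hne i), Finset.mem_image_of_mem _ (Finset.mem_univ _)⟩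
    have hm : F (i - 1) ∈ (Finset.image F Finset.univ).erase (F i) := by
      refine Finset.mem_erase.mpr ⟨?_, Finset.mem_image_of_mem _ (Finset.mem_univ _)⟩
      have := hne (i - 1)
      rwa [sub_add_cancel] at this
    have h1 : F i ∩ F (i + 1) ⊆ F j := by
      intro x hx
      have := hGmax _ hp (by rw [Finset.inter_comm] at hx; exact hx)
      exact (Finset.mem_inter.mp this).1
    have h2 : F (i - 1) ∩ F i ⊆ F j := by
      intro x hx
      exact (Finset.mem_inter.mp (hGmax _ hm hx)).1
    have e1 : F j = F (i + 1) := by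
      rcases (hcirc i).2.2.2 _ (hmemΔ j) h1 with h | h
      · exact absurd h hGne
      · exact h
    have e2 : F j = F (i - 1) := by
      have hsn := (hcirc (i - 1)).2.2.2 _ (hmemΔ j)
      rw [sub_add_cancel] at hsn
      rcases hsn h2 with h | h
      · exact h
      · exact absurd h hGne
    have hij : i + 1 = i - 1 := hinj (e1.symm.trans e2)
    have h3 : (1 : Fin (n + 3)) = -1 := by
      rw [sub_eq_add_neg] at hij
      exact add_left_cancel hij
    have h4 : (1 : Fin (n + 3)) + 1 = 0 := by
      nth_rewrite 1 [h3]; exact neg_add_cancel (1 : Fin (n + 3))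
    have h5 := congrArg Fin.val h4
    rw [Fin.add_def] at h5
    simp only [Fin.val_mk, Fin.val_one, Fin.val_zero] at h5
    rw [Nat.mod_eq_of_lt (by omega : 1 + 1 < n + 3)] at h5
    omega
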